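/- Let F be a field and α, β ∈ F with α ≠ 0 and α not a root of unity (αᵏ ≠ 1 for all integers k ≥ 1; in particular α ≠ 1). Let φ be the F-algebra automorphism of the polynomial ring F[t] determined by φ(t) = αt + β, and set t̃ = (α − 1)t + β. If J is a nonzero proper ideal of F[t] with φ(J) ⊆ J, then there exists an integer n ≥ 1 such that J is the principal ideal generated by t̃ⁿ. -/

import Mathlib

open Polynomial

private lemma comp_C_mul_X_coeff {F : Type*} [CommSemiring F] (h : F[X]) (a : F) (i : ℕ) :
    (h.comp (C a * X)).coeff i = a ^ i * h.coeff i := by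
  induction h using Polynomial.induction_on' with
  | add p q hp hq => simp [add_comp, hp, hq, mul_add]
  | monomial n b =>
    rcases eq_or_ne i n with rfl | hni
    · rw [monomial_comp, mul_pow, ← C_pow, ← mul_assoc, ← C_mul, coeff_C_mul, coeff_X_pow,
        coeff_monomial, if_pos rfl, if_pos rfl]
      ring
    · rw [monomial_comp, mul_pow, ← C_pow, ← mul_assoc, ← C_mul, coeff_C_mul, coeff_X_pow,
        coeff_monomial, if_neg hni, if_neg (Ne.symm hni)]
      ring

/-- Let `F` be a field, `α, β ∈ F` with `α ≠ 0` and `α` not a root of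
unity.  Let `φ` be the `F`-algebra automorphism of `F[t]` with `φ(t) = αt + β` and set
`t̃ = (α − 1)t + β`.  If `J` is a nonzero proper `φ`-stable ideal of `F[t]`, then
`J = (t̃ⁿ)` for some `n ≥ 1`. -/
theorem stmt_1 {F : Type*} [Field F] (α β : F) (hα0 : α ≠ 0)
    (hru : ∀ k : ℕ, 1 ≤ k → α ^ k ≠ 1)
    (φ : Polynomial F ≃ₐ[F] Polynomial F)
    (hφ : φ X = C α * X + C β)
    (J : Ideal (Polynomial F)) (hJbot : J ≠ ⊥) (hJtop : J ≠ ⊤)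
    (hstab : ∀ f ∈ J, φ f ∈ J) :
    ∃ n : ℕ, 1 ≤ n ∧ J = Ideal.span {(C (α - 1) * X + C β) ^ n} := by
  have hα1 : α ≠ 1 := by simpa using hru 1 le_rfl
  have hα1' : α - 1 ≠ 0 := sub_ne_zero.mpr hα1
  have : Invertible (α - 1) := invertibleOfNonzero hα1'
  set ttl : F[X] := C (α - 1) * X + C β with httl
  set σ : F[X] ≃ₐ[F] F[X] := algEquivCMulXAddC (α - 1) β with hσ
  have hσ_apply : ∀ p : F[X], σ p = aeval ttl p := fun p => rfl
  -- φ acts by composition with φ X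
  have hφ_aeval : ∀ p : F[X], φ p = aeval (C α * X + C β) p := by
    intro p
    rw [show φ p = φ (aeval X p) by rw [aeval_X_left_apply],
      show φ (aeval X p) = aeval (φ X) p from (aeval_algHom_apply φ X p).symm, hφ]
  -- key: φ ttl = C α * ttl
  have hφttl : φ ttl = C α * ttl := by
    rw [hφ_aeval]
    simp only [httl, map_add, map_mul, aeval_C, aeval_X, algebraMap_eq, map_sub, map_one]
    ring
  -- take a generator
  obtain ⟨g, hgJ⟩ := (IsPrincipalIdealRing.principal J).principal
  rw [Ideal.submodule_span_eq] at hgJ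
  have hg0 : g ≠ 0 := by
    rintro rfl; exact hJbot (by simp [hgJ])
  -- φ g ∈ J, so g ∣ φ g
  have hdvd : g ∣ φ g := by
    have := hstab g (hgJ ▸ Ideal.subset_span rfl)
    rwa [hgJ, Ideal.mem_span_singleton] at this
  have hφg0 : φ g ≠ 0 := fun h => hg0 (by simpa using congrArg φ.symm h)
  -- degrees are equal
  have hdeg : (φ g).natDegree = g.natDegree := by
    rw [hφ_aeval, ← comp_eq_aeval, natDegree_comp, natDegree_linear hα0, mul_one]
  obtain ⟨u, hu⟩ := hdvd
  have hu0 : u ≠ 0 := fun h => hφg0 (by simp [hu, h])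
  have hudeg : u.natDegree = 0 := by
    have := hdeg
    rw [hu, natDegree_mul hg0 hu0] at this
    omega
  set c : F := u.coeff 0 with hc
  have huc : u = C c := eq_C_of_natDegree_eq_zero hudeg
  have hc0 : c ≠ 0 := fun h => hu0 (by rw [huc, h, map_zero])
  -- pass to h := σ.symm g
  set h : F[X] := σ.symm g with hh
  have hgh : g = aeval ttl h := by rw [← hσ_apply, hh, AlgEquiv.apply_symm_apply]
  -- functional equation for h
  have hkey : h.comp (C α * X) = C c * h := by
    apply σ.injective
    rw [hσ_apply, hσ_apply, aeval_comp]
    have e0 : aeval ttl (C α * X) = C α * ttl := by simp [algebraMap_eq]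
    rw [e0, map_mul, aeval_C, algebraMap_eq, ← hgh]
    calc aeval (C α * ttl) h = φ (aeval ttl h) := by
          rw [← hφttl]; exact aeval_algHom_apply φ ttl h
      _ = C c * g := by rw [← hgh, hu, huc, mul_comm]
  -- coefficientwise
  have hcoeff : ∀ i, α ^ i * h.coeff i = c * h.coeff i := by
    intro i
    have := congrArg (fun p => Polynomial.coeff p i) hkey
    rw [_root_.comp_C_mul_X_coeff, coeff_C_mul] at this; exact this
  have hh0 : h ≠ 0 := fun h0 => hg0 (by simp [hgh, h0])
  set n : ℕ := h.natDegree with hn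
  have hcn : h.coeff n ≠ 0 := by
    simpa [hn] using leadingCoeff_ne_zero.mpr hh0
  have hαn : α ^ n = c := by
    exact mul_right_cancel₀ hcn (hcoeff n)
  -- h = C (h.coeff n) * X ^ n
  have hhC : h = C (h.coeff n) * X ^ n := by
    ext i
    rw [coeff_C_mul, coeff_X_pow]
    by_cases hi : i = n
    · simp [hi]
    · simp only [hi, if_false, mul_zero]
      by_contra hne
      have hαi : α ^ i = c := mul_right_cancel₀ hne (hcoeff i)
      have : α ^ i = α ^ n := by rw [hαi, hαn]
      rcases lt_trichotomy i n with hlt | heq | hgt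
      · have : α ^ (n - i) = 1 := by
          have hpow : α ^ i * α ^ (n - i) = α ^ i * 1 := by
            rw [mul_one, ← pow_add]
            rw [this]
            congr 1; omega
          exact mul_left_cancel₀ (pow_ne_zero i hα0) hpow
        exact hru (n - i) (by omega) this
      · exact hi heq
      · have : α ^ (i - n) = 1 := by
          have hpow : α ^ n * α ^ (i - n) = α ^ n * 1 := by
            rw [mul_one, ← pow_add, ← this]
            congr 1; omega
          exact mul_left_cancel₀ (pow_ne_zero n hα0) hpow
        exact hru (i - n) (by omega) this
  -- conclude : g = C (h.coeff n) * ttl ^ n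
  have hgttl : g = C (h.coeff n) * ttl ^ n := by
    rw [hgh, hhC]
    simp [algebraMap_eq]
  have hJ : J = Ideal.span {ttl ^ n} := by
    rw [hgJ, hgttl, Ideal.span_singleton_mul_left_unit (isUnit_C.mpr hcn.isUnit)]
  refine ⟨n, ?_, hJ⟩
  by_contra hn1
  have hn0 : n = 0 := by omega
  apply hJtop
  rw [hJ, hn0, pow_zero, Ideal.span_singleton_one]
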